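/- Let R = μ₀R⁰ + Σ_{i=1}^m μᵢR^{Jᵢ} be a semi-Clifford algebraic curvature tensor on a scalar product space (V,g), i.e. the Hurwitz-like constants satisfy cᵢ ∈ {−1,1} for all i, and suppose μᵢ ≠ 0 for all 1 ≤ i ≤ m. If (3cᵢμᵢ + μ₀)·μᵢ > 0 for all 1 ≤ i ≤ m, or (3cᵢμᵢ + μ₀)·μᵢ < 0 for all 1 ≤ i ≤ m, then R is totally Jacobi-dual. -/

import Mathlib

open Module Finset

/-- The algebraic curvature tensor `R⁰` of constant sectional curvature one. -/
def R0 {V : Type*} [AddCommGroup V] [Module ℝ V] (g : LinearMap.BilinForm ℝ V)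
    (X Y Z W : V) : ℝ :=
  g Y Z * g X W - g X Z * g Y W

/-- The algebraic curvature tensor `R^J` generated by a `g`-skew-adjoint endomorphism `J`. -/
def RJ {V : Type*} [AddCommGroup V] [Module ℝ V] (g : LinearMap.BilinForm ℝ V)
    (J : V →ₗ[ℝ] V) (X Y Z W : V) : ℝ :=
  g (J X) Z * g (J Y) W - g (J Y) Z * g (J X) W + 2 * g (J X) Y * g (J Z) W

/-- Extract vector equality from equality of all pairings, via nondegeneracy. -/
lemma eq_of_pairings {V : Type*} [AddCommGroup V] [Module ℝ V]
    (g : LinearMap.BilinForm ℝ V) (hnd : g.Nondegenerate) (w w' : V)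
    (h : ∀ z, g w z = g w' z) : w = w' := by
  have h0 : ∀ z, g (w - w') z = 0 := by
    intro z
    rw [map_sub, LinearMap.sub_apply, h z, sub_self]
  exact sub_eq_zero.mp (hnd.1 (w - w') h0)

/-- Antisymmetrization collapse of the double sum. -/
lemma double_sum_collapse {V : Type*} [AddCommGroup V] [Module ℝ V]
    {m : ℕ} (c : Fin m → ℝ) (J : Fin m → V →ₗ[ℝ] V)
    (hhur : ∀ i j, J i ∘ₗ J j + J j ∘ₗ J i
      = ((if i = j then 2 * c i else 0 : ℝ) • LinearMap.id : V →ₗ[ℝ] V))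
    (p : Fin m → ℝ) (X : V) :
    ∑ i, ∑ j, (p i * p j) • J i (J j X) = ∑ i, (c i * p i ^ 2) • X := by
  have key : ∀ i j, J i (J j X) + J j (J i X) = (if i = j then 2 * c i else 0 : ℝ) • X := by
    intro i j
    have := congrArg (fun f : V →ₗ[ℝ] V => f X) (hhur i j)
    simpa only [LinearMap.add_apply, LinearMap.comp_apply, LinearMap.smul_apply,
      LinearMap.id_apply] using this
  have hswap : (∑ i, ∑ j, (p i * p j) • J i (J j X))
      = ∑ i, ∑ j, (p j * p i) • J j (J i X) := Finset.sum_comm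
  have h2 : (∑ i, ∑ j, (p i * p j) • J i (J j X)) + (∑ i, ∑ j, (p i * p j) • J i (J j X))
      = ∑ i, (2 * (c i * p i ^ 2)) • X := by
    nth_rewrite 2 [hswap]
    rw [← Finset.sum_add_distrib]
    have hout : ∀ i : Fin m, ((∑ j, (p i * p j) • J i (J j X)) + ∑ j, (p j * p i) • J j (J i X))
        = (2 * (c i * p i ^ 2)) • X := by
      intro i
      rw [← Finset.sum_add_distrib]
      have hin : ∀ j : Fin m, ((p i * p j) • J i (J j X) + (p j * p i) • J j (J i X))
          = if i = j then (2 * (c i * p i ^ 2)) • X else 0 := by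
        intro j
        rw [mul_comm (p j) (p i), ← smul_add, key i j]
        by_cases h : i = j
        · subst h; simp [smul_smul]; ring_nf
        · simp [h]
      rw [Finset.sum_congr rfl (fun j _ => hin j)]
      simp
    rw [Finset.sum_congr rfl (fun i _ => hout i)]
  have h2' : (2:ℝ) • (∑ i, ∑ j, (p i * p j) • J i (J j X))
      = (2:ℝ) • (∑ i, (c i * p i ^ 2) • X) := by
    rw [two_smul, h2, Finset.smul_sum]
    exact Finset.sum_congr rfl fun i _ => by rw [smul_smul]
  exact smul_right_injective V two_ne_zero h2'

/-- Case A algebra: substituting `D • Y` into the Jacobi operator formula. -/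
lemma caseA_algebra {V : Type*} [AddCommGroup V] [Module ℝ V]
    {m : ℕ} (c : Fin m → ℝ) (J : Fin m → V →ₗ[ℝ] V)
    (hhur : ∀ i j, J i ∘ₗ J j + J j ∘ₗ J i
      = ((if i = j then 2 * c i else 0 : ℝ) • LinearMap.id : V →ₗ[ℝ] V))
    (D q eY : ℝ) (p : Fin m → ℝ) (X Y W : V)
    (hE : D • Y = q • X + ∑ i, p i • J i X)
    (hW : W = eY • X - q • Y + ∑ i, p i • J i Y) :
    D • W = (D * eY - q * q + ∑ i, c i * p i ^ 2) • X := by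
  have hDJ : ∀ i : Fin m, D • J i Y = q • J i X + ∑ j, p j • J i (J j X) := by
    intro i
    have h := congrArg (J i) hE
    rw [map_smul, map_add, map_smul, map_sum] at h
    rw [h]
    congr 1
    exact Finset.sum_congr rfl fun j _ => by rw [map_smul]
  calc D • W = (D * eY) • X - q • (D • Y) + ∑ i, p i • (D • J i Y) := by
        rw [hW, smul_add, smul_sub, smul_smul, smul_comm D q Y, Finset.smul_sum]
        congr 1
        exact Finset.sum_congr rfl fun i _ => smul_comm D (p i) (J i Y)
    _ = (D * eY) • X - ((q * q) • X + ∑ i, (q * p i) • J i X)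
        + (∑ i, (p i * q) • J i X + ∑ i, ∑ j, (p i * p j) • J i (J j X)) := by
        rw [hE]
        congr 1
        · congr 1
          rw [smul_add, smul_smul, Finset.smul_sum]
          congr 1
          exact Finset.sum_congr rfl fun i _ => smul_smul q (p i) (J i X)
        · rw [← Finset.sum_add_distrib]
          refine Finset.sum_congr rfl fun i _ => ?_
          rw [hDJ i, smul_add, smul_smul, mul_comm (p i) q, Finset.smul_sum]
          rw [mul_comm q (p i)]
          congr 1
          exact Finset.sum_congr rfl fun j _ => smul_smul (p i) (p j) (J i (J j X))
    _ = (D * eY - q * q + ∑ i, c i * p i ^ 2) • X := by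
        rw [double_sum_collapse c J hhur p X]
        have : ∑ i, (q * p i) • J i X = ∑ i, (p i * q) • J i X :=
          Finset.sum_congr rfl fun i _ => by rw [mul_comm]
        rw [this, ← Finset.sum_smul, add_smul, sub_smul]
        abel

/-- Case B algebra: the degenerate eigenvalue case. -/
lemma caseB_algebra {V : Type*} [AddCommGroup V] [Module ℝ V]
    {m : ℕ} (c : Fin m → ℝ) (J : Fin m → V →ₗ[ℝ] V)
    (hhur : ∀ i j, J i ∘ₗ J j + J j ∘ₗ J i
      = ((if i = j then 2 * c i else 0 : ℝ) • LinearMap.id : V →ₗ[ℝ] V))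
    (q : ℝ) (p : Fin m → ℝ) (X : V)
    (hv : (0:V) = q • X + ∑ i, p i • J i X) :
    ((∑ i, c i * p i ^ 2) - q * q) • X = 0 := by
  have hS : ∑ i, p i • J i X = (-q) • X := by
    rw [neg_smul, eq_neg_iff_add_eq_zero, add_comm]
    exact hv.symm
  have hdouble : ∑ i, ∑ j, (p i * p j) • J i (J j X) = (q * q) • X := by
    calc ∑ i, ∑ j, (p i * p j) • J i (J j X)
        = ∑ i, p i • J i (∑ j, p j • J j X) := by
          refine Finset.sum_congr rfl fun i _ => ?_
          rw [map_sum, Finset.smul_sum]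
          exact Finset.sum_congr rfl fun j _ => by rw [map_smul, smul_smul]
      _ = ∑ i, p i • J i ((-q) • X) := by rw [hS]
      _ = (-q) • ∑ i, p i • J i X := by
          rw [Finset.smul_sum]
          exact Finset.sum_congr rfl fun i _ => by rw [map_smul, smul_comm]
      _ = (q * q) • X := by rw [hS, smul_smul]; ring_nf
  rw [double_sum_collapse c J hhur p X, ← Finset.sum_smul] at hdouble
  rw [sub_smul, hdouble, sub_self]

/-- Theorem 7 of the paper: a semi-Clifford algebraic curvature tensor
(`cᵢ ∈ {−1,1}`, `μᵢ ≠ 0`) such that `(3cᵢμᵢ+μ₀)μᵢ > 0` for all `i`, or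
`(3cᵢμᵢ+μ₀)μᵢ < 0` for all `i`, is totally Jacobi-dual. -/
theorem semiClifford_totally_jacobiDual
    {V : Type*} [AddCommGroup V] [Module ℝ V] [FiniteDimensional ℝ V]
    (g : LinearMap.BilinForm ℝ V) (hsymm : ∀ x y, g x y = g y x) (hnd : g.Nondegenerate)
    {m : ℕ} (μ₀ : ℝ) (μ c : Fin m → ℝ) (J : Fin m → V →ₗ[ℝ] V)
    (hskew : ∀ i, ∀ x y : V, g (J i x) y = - g x (J i y))
    (hhur : ∀ i j, J i ∘ₗ J j + J j ∘ₗ J i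
      = ((if i = j then 2 * c i else 0 : ℝ) • LinearMap.id : V →ₗ[ℝ] V))
    (R : V → V → V → V → ℝ)
    (hR : ∀ X Y Z W, R X Y Z W = μ₀ * R0 g X Y Z W + ∑ i, μ i * RJ g (J i) X Y Z W)
    (Jac : V → V →ₗ[ℝ] V)
    (hJac : ∀ X Y Z, g (Jac X Y) Z = R Y X X Z)
    (hc : ∀ i, c i = -1 ∨ c i = 1) (hμ : ∀ i, μ i ≠ 0)
    (hsign : (∀ i, (3 * c i * μ i + μ₀) * μ i > 0) ∨ (∀ i, (3 * c i * μ i + μ₀) * μ i < 0)) :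
    ∀ X Y : V, X ≠ 0 →
      (∃ lam : ℝ, Module.End.HasEigenvector (Jac X) lam Y) →
      ∃ lam : ℝ, Module.End.HasEigenvector (Jac Y) lam X := by
  rintro X Y hX ⟨lam, hev⟩
  -- basic facts about skew-adjoint maps
  have hgJXX : ∀ (i : Fin m) (x : V), g (J i x) x = 0 := by
    intro i x
    have h1 : g (J i x) x = - g x (J i x) := hskew i x x
    have h2 : g x (J i x) = g (J i x) x := hsymm _ _
    linarith
  -- the vector formula for the Jacobi operator
  have jacv : ∀ P Q : V, Jac P Q = (μ₀ * g P P) • Q - (μ₀ * g P Q) • P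
      - ∑ i, (3 * (μ i * g Q (J i P))) • J i P := by
    intro P Q
    apply eq_of_pairings g hnd
    intro Z
    rw [hJac, hR]
    have hRHS : g ((μ₀ * g P P) • Q - (μ₀ * g P Q) • P
        - ∑ i, (3 * (μ i * g Q (J i P))) • J i P) Z
        = (μ₀ * g P P) * g Q Z - (μ₀ * g P Q) * g P Z
          - ∑ i, (3 * (μ i * g Q (J i P))) * g (J i P) Z := by
      simp [map_sub, map_smul, map_sum, LinearMap.sub_apply, LinearMap.smul_apply,
        LinearMap.sum_apply, smul_eq_mul]
    rw [hRHS]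
    simp only [R0, RJ]
    have hterm : ∀ i : Fin m, μ i * (g (J i Q) P * g (J i P) Z - g (J i P) P * g (J i Q) Z
        + 2 * g (J i Q) P * g (J i P) Z) = -((3 * (μ i * g Q (J i P))) * g (J i P) Z) := by
      intro i
      rw [hgJXX i P, hskew i Q P]
      ring
    rw [Finset.sum_congr rfl fun i _ => hterm i, hsymm Q P, Finset.sum_neg_distrib]
    ring
  -- the eigenvector equation, rearranged
  have hE : (μ₀ * g X X - lam) • Y
      = (μ₀ * g X Y) • X + ∑ i, (3 * (μ i * g Y (J i X))) • J i X := by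
    have h := Module.End.mem_eigenspace_iff.mp hev.1
    rw [jacv X Y] at h
    rw [sub_smul, ← h]
    abel
  -- formula for Jac Y X in terms of the aᵢ = g Y (J i X)
  have hJYX : Jac Y X = (μ₀ * g Y Y) • X - (μ₀ * g X Y) • Y
      + ∑ i, (3 * (μ i * g Y (J i X))) • J i Y := by
    rw [jacv Y X, hsymm Y X]
    have hax : ∀ i : Fin m, (3 * (μ i * g X (J i Y))) • J i Y
        = -((3 * (μ i * g Y (J i X))) • J i Y) := by
      intro i
      have h1 : g X (J i Y) = - g Y (J i X) := by
        rw [hsymm X (J i Y), hskew i Y X]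
      rw [h1, ← neg_smul]
      congr 1
      ring
    rw [Finset.sum_congr rfl fun i _ => hax i, Finset.sum_neg_distrib, sub_neg_eq_add]
  by_cases hD : μ₀ * g X X - lam = 0
  · -- degenerate case: λ = μ₀ εX
    have hv : (0:V) = (μ₀ * g X Y) • X + ∑ i, (3 * (μ i * g Y (J i X))) • J i X := by
      rw [← hE, hD, zero_smul]
    -- pairing with Y
    have hpair : (0:ℝ) = (μ₀ * g X Y) * g X Y
        + ∑ i, (3 * (μ i * g Y (J i X))) * g Y (J i X) := by
      have h := congrArg (fun w => g w Y) hv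
      simp only [map_zero, LinearMap.zero_apply, map_add, map_smul, map_sum,
        LinearMap.add_apply, LinearMap.smul_apply, LinearMap.sum_apply, smul_eq_mul] at h
      rw [h, hsymm X Y]
      congr 1
      exact Finset.sum_congr rfl fun i _ => by rw [hsymm (J i X) Y]
    -- the quadratic relation from applying the operator twice
    have hquad : ((∑ i, c i * (3 * (μ i * g Y (J i X))) ^ 2)
        - (μ₀ * g X Y) * (μ₀ * g X Y)) • X = 0 :=
      caseB_algebra c J hhur (μ₀ * g X Y) (fun i => 3 * (μ i * g Y (J i X))) X hv
    have hquad' : (∑ i, c i * (3 * (μ i * g Y (J i X))) ^ 2)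
        = (μ₀ * g X Y) * (μ₀ * g X Y) := by
      rcases smul_eq_zero.mp hquad with h | h
      · linarith [sub_eq_zero.mp (by linarith [h] : (∑ i, c i * (3 * (μ i * g Y (J i X))) ^ 2) - (μ₀ * g X Y) * (μ₀ * g X Y) = 0)]
      · exact absurd h hX
    -- the signed sum vanishes
    have hkey : ∑ i, ((3 * c i * μ i + μ₀) * μ i) * (g Y (J i X)) ^ 2 = 0 := by
      have expand : ∀ i : Fin m, ((3 * c i * μ i + μ₀) * μ i) * (g Y (J i X)) ^ 2
          = (1/3) * (c i * (3 * (μ i * g Y (J i X))) ^ 2)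
            + (μ₀/3) * ((3 * (μ i * g Y (J i X))) * g Y (J i X)) := by
        intro i; ring
      rw [Finset.sum_congr rfl fun i _ => expand i, Finset.sum_add_distrib,
        ← Finset.mul_sum, ← Finset.mul_sum, hquad']
      have hs : ∑ i, (3 * (μ i * g Y (J i X))) * g Y (J i X)
          = -((μ₀ * g X Y) * g X Y) := by linarith [hpair]
      rw [hs]
      ring
    -- sign condition forces all aᵢ = 0
    have haz : ∀ i : Fin m, g Y (J i X) = 0 := by
      rcases hsign with hpos | hneg
      · intro i
        have hz := (Finset.sum_eq_zero_iff_of_nonneg (fun j _ =>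
          mul_nonneg (le_of_lt (hpos j)) (sq_nonneg _))).mp hkey i (Finset.mem_univ i)
        rcases mul_eq_zero.mp hz with h | h
        · exact absurd h (ne_of_gt (hpos i))
        · exact pow_eq_zero_iff (by norm_num) |>.mp h
      · intro i
        have hkey' : ∑ i, (-((3 * c i * μ i + μ₀) * μ i)) * (g Y (J i X)) ^ 2 = 0 := by
          rw [Finset.sum_congr rfl fun i _ => (by ring :
            (-((3 * c i * μ i + μ₀) * μ i)) * (g Y (J i X)) ^ 2
            = -(((3 * c i * μ i + μ₀) * μ i) * (g Y (J i X)) ^ 2)),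
            Finset.sum_neg_distrib, hkey, neg_zero]
        have hz := (Finset.sum_eq_zero_iff_of_nonneg (fun j _ =>
          mul_nonneg (le_of_lt (neg_pos.mpr (hneg j))) (sq_nonneg _))).mp hkey' i
          (Finset.mem_univ i)
        rcases mul_eq_zero.mp hz with h | h
        · exact absurd h (ne_of_gt (neg_pos.mpr (hneg i)))
        · exact pow_eq_zero_iff (by norm_num) |>.mp h
    -- hence q = 0
    have hq : μ₀ * g X Y = 0 := by
      have hv' : (0:V) = (μ₀ * g X Y) • X := by
        rw [hv, Finset.sum_congr rfl fun i _ => (by rw [haz i]; simp :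
          (3 * (μ i * g Y (J i X))) • J i X = (0:V)), Finset.sum_const, smul_zero, add_zero]
      rcases smul_eq_zero.mp hv'.symm with h | h
      · exact h
      · exact absurd h hX
    refine ⟨μ₀ * g Y Y, Module.End.hasEigenvector_iff.mpr
      ⟨Module.End.mem_eigenspace_iff.mpr ?_, hX⟩⟩
    rw [hJYX, hq, zero_smul, sub_zero, Finset.sum_congr rfl fun i _ => (by rw [haz i]; simp :
      (3 * (μ i * g Y (J i X))) • J i Y = (0:V)), Finset.sum_const, smul_zero, add_zero]
  · -- generic case: D ≠ 0
    set D := μ₀ * g X X - lam with hDdef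
    have hbig := caseA_algebra c J hhur D (μ₀ * g X Y) (μ₀ * g Y Y)
      (fun i => 3 * (μ i * g Y (J i X))) X Y (Jac Y X) hE hJYX
    refine ⟨D⁻¹ * (D * (μ₀ * g Y Y) - (μ₀ * g X Y) * (μ₀ * g X Y)
      + ∑ i, c i * (3 * (μ i * g Y (J i X))) ^ 2), Module.End.hasEigenvector_iff.mpr
      ⟨Module.End.mem_eigenspace_iff.mpr ?_, hX⟩⟩
    apply smul_right_injective V hD
    beta_reduce
    beta_reduce at hbig
    rw [hbig, smul_smul]
    congr 1
    field_simp
    congr 1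
    exact Finset.sum_congr rfl fun i _ => by ring
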